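/- Let L be a finitary first-order language that is relational (no function symbols and no constant symbols) and let φ be a Σ⁰₂ L-sentence (of the form ∃x₁…x_k ∀y₁…y_l ψ with ψ quantifier-free). Then there is an L-sentence χ expressing θ(φ). -/

import Mathlib

/- STATEMENT 1: For a relational finitary first-order language L and a Σ⁰₂ L-sentence φ
(of the form ∃x₁…x_k ∀y₁…y_l ψ with ψ quantifier-free), there is an L-sentence χ
expressing θ(φ). -/

open FirstOrder Language

universe u v

namespace SatSub

/-- Universally quantify the last `l` of `k + l` bound variables. -/
def allsFrom {L : FirstOrder.Language.{u, v}} {k : ℕ} :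
    ∀ l : ℕ, L.BoundedFormula Empty (k + l) → L.BoundedFormula Empty k
  | 0, ψ => ψ
  | l + 1, ψ => allsFrom l ψ.all

/-- The Σ⁰₂ sentence `∃ x₁ … x_k, ∀ y₁ … y_l, ψ` with `ψ` quantifier-free. -/
def sigma2 {L : FirstOrder.Language.{u, v}} (k l : ℕ)
    (ψ : L.BoundedFormula Empty (k + l)) : L.Sentence :=
  (allsFrom l ψ).exs

theorem realize_allsFrom {L : FirstOrder.Language.{u, v}} {k : ℕ} (l : ℕ)
    (ψ : L.BoundedFormula Empty (k + l)) {M : Type*} [L.Structure M]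
    (v : Empty → M) (xs : Fin k → M) :
    (allsFrom l ψ).Realize v xs ↔ ∀ ys : Fin l → M, ψ.Realize v (Fin.append xs ys) := by
  induction l with
  | zero =>
    simp only [allsFrom]
    constructor
    · intro h ys
      rw [Subsingleton.elim ys Fin.elim0, Fin.append_elim0]
      exact h
    · intro h
      have := h Fin.elim0
      rw [Fin.append_elim0] at this
      exact this
  | succ l ih =>
    simp only [allsFrom, ih, BoundedFormula.realize_all]
    constructor
    · intro h ys
      have := h (Fin.init ys) (ys (Fin.last l))
      rwa [← Fin.append_snoc, Fin.snoc_init_self] at this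
    · intro h ys a
      rw [← Fin.append_snoc]
      exact h _

theorem theta_of_sigma2_expressible
    {L : FirstOrder.Language.{u, v}} [L.IsRelational] (φ : L.Sentence)
    (k l : ℕ) (ψ : L.BoundedFormula Empty (k + l)) (hψ : ψ.IsQF)
    (hφ : φ = sigma2 k l ψ) :
    ∃ χ : L.Sentence,
      ∀ (M : Type (max u v)) [L.Structure M] [Nonempty M],
        M ⊨ χ ↔ ∃ S : L.Substructure M, Nonempty S ∧ S ⊨ φ := by
  classical
  -- the relabeling map for a choice `f` of existential indices for universal variables
  let g : (Fin l → Fin (k + 1)) → (Empty ⊕ Fin (k + l)) → Fin (k + 1) :=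
    fun f => Sum.elim Empty.elim (Fin.addCases (fun p => p.castSucc) f)
  let conj : L.Formula (Fin (k + 1)) :=
    BoundedFormula.iInf (fun f : Fin l → Fin (k + 1) => ψ.toFormula.relabel (g f))
  refine ⟨(conj.relabel (Sum.inr : Fin (k + 1) → Empty ⊕ Fin (k + 1))).iExs (Fin (k + 1)), ?_⟩
  intro M _ _
  subst hφ
  constructor
  · -- M ⊨ χ → substructure generated by the witnesses models φ
    intro h
    rw [Sentence.Realize, Formula.realize_iExs] at h
    obtain ⟨i, hi⟩ := h
    rw [Formula.realize_relabel, Sum.elim_comp_inr] at hi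
    simp only [conj, Formula.Realize, BoundedFormula.realize_iInf, Finset.mem_univ,
      forall_true_left, true_implies] at hi
    have hmem : ∀ j, i j ∈ Substructure.closure L (Set.range i) :=
      fun j => Substructure.subset_closure ⟨j, rfl⟩
    refine ⟨Substructure.closure L (Set.range i), ⟨⟨i 0, hmem 0⟩⟩, ?_⟩
    rw [sigma2, Sentence.Realize, BoundedFormula.realize_exs]
    refine ⟨fun p => ⟨i p.castSucc, hmem p.castSucc⟩, ?_⟩
    rw [realize_allsFrom]
    intro ys
    -- each ys q lies in the range of i
    have hys : ∀ q : Fin l, ∃ j : Fin (k + 1), i j = (ys q : M) := by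
      intro q
      have h2 : (ys q : M) ∈ Substructure.closure L (Set.range i) := (ys q).2
      rwa [Substructure.mem_closure_iff_of_isRelational] at h2
    choose f hf using hys
    have hc : (ψ.toFormula.relabel (g f)).Realize (fun a => i a) := hi f
    simp only [Formula.realize_relabel, BoundedFormula.realize_toFormula] at hc
    rw [← hψ.realize_embedding (Substructure.closure L (Set.range i)).subtype]
    convert hc using 1
    funext j
    refine Fin.addCases (fun p => ?_) (fun q => ?_) j
    · simp [Fin.append_left, g]
    · simp [Fin.append_right, g, hf]
  · -- a substructure models φ → M ⊨ χ
    rintro ⟨S, ⟨s₀⟩, hSφ⟩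
    rw [sigma2, Sentence.Realize, BoundedFormula.realize_exs] at hSφ
    obtain ⟨a, ha⟩ := hSφ
    rw [realize_allsFrom] at ha
    set iS : Fin (k + 1) → S := Fin.snoc a s₀ with hiS
    rw [Sentence.Realize, Formula.realize_iExs]
    refine ⟨fun j => (iS j : M), ?_⟩
    rw [Formula.realize_relabel, Sum.elim_comp_inr]
    simp only [conj, Formula.Realize, BoundedFormula.realize_iInf, Finset.mem_univ,
      forall_true_left, true_implies]
    intro f
    show (ψ.toFormula.relabel (g f)).Realize (fun j => (iS j : M))
    simp only [Formula.realize_relabel, BoundedFormula.realize_toFormula]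
    have := ha (fun q => iS (f q))
    rw [← hψ.realize_embedding S.subtype] at this
    convert this using 1
    funext j
    refine Fin.addCases (fun p => ?_) (fun q => ?_) j
    · simp [g, Fin.append_left, iS, Fin.snoc_castSucc, Substructure.coe_subtype]
    · simp [g, Fin.append_right, Substructure.coe_subtype]
end SatSub
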